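/- arXiv:2209.06908 — 2 statements merged into one kernel-verified Lean document; each statement's English description precedes it below -/
import Mathlib

section
/- Let N ≥ 3, f ∈ C¹(ℝ,ℝ), F(s) = ∫₀ˢ f, H(s) = f(s)s − 2F(s), and assume s ↦ H(s)/|s|^{2+4/N} is strictly increasing on (0,∞), strictly decreasing on (−∞,0), with limit 0 at 0. Then for any s ∈ ℝ and any t₀ ∈ (0,1], the pointwise inequality ((1−t₀²)/2)·(N/2)·H(s) + t₀^{−N}F(t₀^{N/2}s) − F(s) ≥ 0 holds; equivalently, ∫_{t₀}^{1} (N/2)·t·|s|^{2+4/N}·[H(s)/|s|^{2+4/N} − H(t^{N/2}s)/|t^{N/2}s|^{2+4/N}] dt ≥ 0 and equals the left-hand side. -/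
open Real Set Filter

theorem stmt9 (N : ℕ) (hN : 3 ≤ N) (f : ℝ → ℝ) (hf : ContDiff ℝ 1 f)
    (F H : ℝ → ℝ)
    (hF : ∀ s : ℝ, F s = ∫ τ in (0 : ℝ)..s, f τ)
    (hH : ∀ s : ℝ, H s = f s * s - 2 * F s)
    (hmono : StrictMonoOn (fun s : ℝ => H s / |s| ^ ((2 : ℝ) + 4 / N)) (Ioi 0))
    (hanti : StrictAntiOn (fun s : ℝ => H s / |s| ^ ((2 : ℝ) + 4 / N)) (Iio 0))
    (hlim : Tendsto (fun s : ℝ => H s / |s| ^ ((2 : ℝ) + 4 / N)) (nhdsWithin 0 {0}ᶜ)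
      (nhds 0)) :
    ∀ s : ℝ, ∀ t₀ : ℝ, t₀ ∈ Ioc (0 : ℝ) 1 →
      0 ≤ ((1 - t₀ ^ 2) / 2) * ((N : ℝ) / 2) * H s +
          t₀ ^ (-(N : ℝ)) * F (t₀ ^ ((N : ℝ) / 2) * s) - F s ∧
      (0 ≤ ∫ t in t₀..1, ((N : ℝ) / 2) * t * |s| ^ ((2 : ℝ) + 4 / N) *
          (H s / |s| ^ ((2 : ℝ) + 4 / N) -
            H (t ^ ((N : ℝ) / 2) * s) / |t ^ ((N : ℝ) / 2) * s| ^ ((2 : ℝ) + 4 / N))) ∧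
      (∫ t in t₀..1, ((N : ℝ) / 2) * t * |s| ^ ((2 : ℝ) + 4 / N) *
          (H s / |s| ^ ((2 : ℝ) + 4 / N) -
            H (t ^ ((N : ℝ) / 2) * s) / |t ^ ((N : ℝ) / 2) * s| ^ ((2 : ℝ) + 4 / N))) =
        ((1 - t₀ ^ 2) / 2) * ((N : ℝ) / 2) * H s +
          t₀ ^ (-(N : ℝ)) * F (t₀ ^ ((N : ℝ) / 2) * s) - F s := by
  have hNpos : (0:ℝ) < N := by exact_mod_cast (by omega : 0 < N)
  have hαpos : (0:ℝ) < (2:ℝ) + 4 / N := by positivity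
  have hFd : ∀ x : ℝ, HasDerivAt F (f x) x := by
    intro x
    have h := (hf.continuous.integral_hasStrictDerivAt 0 x).hasDerivAt
    have hFe : F = fun u => ∫ τ in (0:ℝ)..u, f τ := funext hF
    rw [hFe]; exact h
  have hFcont : Continuous F := by
    have : Differentiable ℝ F := fun x => (hFd x).differentiableAt
    exact this.continuous
  have hHcont : Continuous H := by
    have : H = fun s => f s * s - 2 * F s := funext hH
    rw [this]
    exact ((hf.continuous.mul continuous_id).sub (continuous_const.mul hFcont))
  intro s t₀ ht₀
  obtain ⟨ht0, ht1⟩ := ht₀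
  by_cases hs : s = 0
  · -- trivial case
    subst hs
    have hF0 : F 0 = 0 := by rw [hF]; simp
    have hH0 : H 0 = 0 := by rw [hH, hF0]; ring
    have hint0 : (∫ t in t₀..1, ((N : ℝ) / 2) * t * |(0:ℝ)| ^ ((2 : ℝ) + 4 / N) *
          (H 0 / |(0:ℝ)| ^ ((2 : ℝ) + 4 / N) -
            H (t ^ ((N : ℝ) / 2) * 0) / |t ^ ((N : ℝ) / 2) * 0| ^ ((2 : ℝ) + 4 / N))) = 0 := by
      simp [Real.zero_rpow hαpos.ne']
    rw [hint0]
    refine ⟨?_, ?_, ?_⟩ <;> simp [hF0, hH0]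
  -- main case
  set C : ℝ := (N:ℝ) / 2 with hC
  have hA : (0:ℝ) < |s| ^ ((2:ℝ) + 4 / N) := by
    apply Real.rpow_pos_of_pos
    exact abs_pos.mpr hs
  set A : ℝ := |s| ^ ((2:ℝ) + 4 / N) with hAdef
  -- derivative of g
  set g : ℝ → ℝ := fun t => t ^ (-(N:ℝ)) * F (t ^ ((N:ℝ)/2) * s) with hg
  have hgd : ∀ t : ℝ, 0 < t →
      HasDerivAt g (C * t ^ (-(N:ℝ)-1) * H (t ^ ((N:ℝ)/2) * s)) t := by
    intro t ht
    have hd1 : HasDerivAt (fun x : ℝ => x ^ (-(N:ℝ))) (-(N:ℝ) * t ^ (-(N:ℝ)-1)) t :=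
      Real.hasDerivAt_rpow_const (Or.inl ht.ne')
    have hd2 : HasDerivAt (fun x : ℝ => x ^ ((N:ℝ)/2)) (((N:ℝ)/2) * t ^ ((N:ℝ)/2-1)) t :=
      Real.hasDerivAt_rpow_const (Or.inl ht.ne')
    have hd3 : HasDerivAt (fun x : ℝ => x ^ ((N:ℝ)/2) * s)
        ((((N:ℝ)/2) * t ^ ((N:ℝ)/2-1)) * s) t := hd2.mul_const s
    have hd4 : HasDerivAt (fun x : ℝ => F (x ^ ((N:ℝ)/2) * s))
        (f (t ^ ((N:ℝ)/2) * s) * ((((N:ℝ)/2) * t ^ ((N:ℝ)/2-1)) * s)) t :=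
      (hFd (t ^ ((N:ℝ)/2) * s)).comp t hd3
    have hd5 := hd1.mul hd4
    refine hd5.congr_deriv ?_
    symm
    have e1 : t ^ (-(N:ℝ)) * t ^ ((N:ℝ)/2 - 1) = t ^ (-(N:ℝ)-1) * t ^ ((N:ℝ)/2) := by
      rw [← Real.rpow_add ht, ← Real.rpow_add ht]; ring_nf
    rw [hH]
    linear_combination (-(((N:ℝ)/2) * s * f (t ^ ((N:ℝ)/2) * s))) * e1

  -- the absolute value computation
  have habs : ∀ t : ℝ, 0 < t →
      |t ^ ((N:ℝ)/2) * s| ^ ((2:ℝ) + 4/N) = t ^ ((N:ℝ)+2) * A := by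
    intro t ht
    have h1 : (0:ℝ) < t ^ ((N:ℝ)/2) := Real.rpow_pos_of_pos ht _
    have hexp : (N:ℝ)/2 * ((2:ℝ) + 4/N) = (N:ℝ) + 2 := by
      field_simp
      ring
    rw [abs_mul, abs_of_pos h1, Real.mul_rpow h1.le (abs_nonneg s),
      ← Real.rpow_mul ht.le, hexp]
  set φ : ℝ → ℝ :=
    fun t => C * t * H s - C * t ^ (-(N:ℝ)-1) * H (t ^ ((N:ℝ)/2) * s) with hφ
  have huIcc : uIcc t₀ 1 = Icc t₀ 1 := uIcc_of_le ht1
  have hcongr : ∀ t ∈ Icc t₀ 1,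
      C * t * A * (H s / A -
        H (t ^ ((N:ℝ)/2) * s) / |t ^ ((N:ℝ)/2) * s| ^ ((2:ℝ) + 4/N)) = φ t := by
    intro t ht
    have htpos : 0 < t := lt_of_lt_of_le ht0 ht.1
    have hT : (0:ℝ) < t ^ ((N:ℝ)+2) := Real.rpow_pos_of_pos htpos _
    have he : (-(N:ℝ)-1) + ((N:ℝ)+2) = 1 := by ring
    have hpow : t ^ (-(N:ℝ)-1) * t ^ ((N:ℝ)+2) = t := by
      rw [← Real.rpow_add htpos, he, Real.rpow_one]
    have hpow' : t ^ (-(N:ℝ)-1) = t / t ^ ((N:ℝ)+2) := by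
      rw [eq_div_iff hT.ne']
      exact hpow
    rw [habs t htpos, hφ]
    simp only
    rw [hpow']
    field_simp
  have hcongr' : EqOn (fun t : ℝ => C * t * A * (H s / A -
        H (t ^ ((N:ℝ)/2) * s) / |t ^ ((N:ℝ)/2) * s| ^ ((2:ℝ) + 4/N))) φ (uIcc t₀ 1) := by
    rw [huIcc]
    intro t ht
    exact hcongr t ht
  have hcont2 : ContinuousOn
      (fun t : ℝ => C * t ^ (-(N:ℝ)-1) * H (t ^ ((N:ℝ)/2) * s)) (Icc t₀ 1) := by
    intro t ht
    have htpos : 0 < t := lt_of_lt_of_le ht0 ht.1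
    apply ContinuousAt.continuousWithinAt
    have c1 : ContinuousAt (fun x : ℝ => x ^ (-(N:ℝ)-1)) t :=
      Real.continuousAt_rpow_const t _ (Or.inl htpos.ne')
    have c2 : ContinuousAt (fun x : ℝ => x ^ ((N:ℝ)/2)) t :=
      Real.continuousAt_rpow_const t _ (Or.inl htpos.ne')
    exact (continuousAt_const.mul c1).mul
      (ContinuousAt.comp hHcont.continuousAt (c2.mul continuousAt_const))
  have hint1 : IntervalIntegrable (fun t : ℝ => C * t * H s) MeasureTheory.volume t₀ 1 :=
    (Continuous.intervalIntegrable (by continuity) t₀ 1)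
  have hint2 : IntervalIntegrable
      (fun t : ℝ => C * t ^ (-(N:ℝ)-1) * H (t ^ ((N:ℝ)/2) * s)) MeasureTheory.volume t₀ 1 :=
    ContinuousOn.intervalIntegrable (by rw [huIcc]; exact hcont2)
  have hI1 : ∫ t in t₀..1, C * t * H s = C * H s * ((1 - t₀^2)/2) := by
    have h : (fun t : ℝ => C * t * H s) = fun t => (C * H s) * t := by
      ext t; ring
    rw [h, intervalIntegral.integral_const_mul, integral_id]
    ring
  have hI2 : ∫ t in t₀..1, C * t ^ (-(N:ℝ)-1) * H (t ^ ((N:ℝ)/2) * s) = g 1 - g t₀ := by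
    apply intervalIntegral.integral_eq_sub_of_hasDerivAt
    · intro t ht
      rw [huIcc] at ht
      exact hgd t (lt_of_lt_of_le ht0 ht.1)
    · exact hint2
  have hg1 : g 1 = F s := by
    simp [hg, Real.one_rpow]
  have key : (∫ t in t₀..1, C * t * A * (H s / A -
        H (t ^ ((N:ℝ)/2) * s) / |t ^ ((N:ℝ)/2) * s| ^ ((2:ℝ) + 4/N))) =
      ((1 - t₀ ^ 2) / 2) * C * H s +
        t₀ ^ (-(N:ℝ)) * F (t₀ ^ ((N:ℝ)/2) * s) - F s := by
    rw [intervalIntegral.integral_congr hcongr', hφ]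
    simp only
    rw [intervalIntegral.integral_sub hint1 hint2, hI1, hI2, hg1]
    simp only [hg]
    ring
  have hnn : 0 ≤ ∫ t in t₀..1, C * t * A * (H s / A -
      H (t ^ ((N:ℝ)/2) * s) / |t ^ ((N:ℝ)/2) * s| ^ ((2:ℝ) + 4/N)) := by
    apply intervalIntegral.integral_nonneg ht1
    intro t ht
    have htpos : 0 < t := lt_of_lt_of_le ht0 ht.1
    have hCA : 0 ≤ C * t * A :=
      mul_nonneg (mul_nonneg (by rw [hC]; positivity) htpos.le) hA.le
    apply mul_nonneg hCA
    rw [sub_nonneg]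
    rcases eq_or_lt_of_le ht.2 with h1 | h1
    · subst h1
      simp [Real.one_rpow, hAdef]
    · have hfac1 : t ^ ((N:ℝ)/2) < 1 := Real.rpow_lt_one htpos.le h1 (by positivity)
      have hfac0 : 0 < t ^ ((N:ℝ)/2) := Real.rpow_pos_of_pos htpos _
      rcases lt_or_gt_of_ne hs with hneg | hpos
      · have hu0 : t ^ ((N:ℝ)/2) * s < 0 := mul_neg_of_pos_of_neg hfac0 hneg
        have hsu : s < t ^ ((N:ℝ)/2) * s := by nlinarith
        exact (hanti (mem_Iio.mpr hneg) (mem_Iio.mpr hu0) hsu).le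
      · have hu0 : 0 < t ^ ((N:ℝ)/2) * s := mul_pos hfac0 hpos
        have hus : t ^ ((N:ℝ)/2) * s < s := by nlinarith
        exact (hmono (mem_Ioi.mpr hu0) (mem_Ioi.mpr hpos) hus).le
  refine ⟨by rw [← key]; exact hnn, hnn, key⟩
end

section
/- Let N ≥ 3 and 2 < q < 2*. Suppose a sequence uₙ ∈ H¹(ℝᴺ) satisfies ‖uₙ‖₂² = cₙ with cₙ bounded, and Aₙ := ‖∇uₙ‖₂² bounded with inf Aₙ > 0. Suppose moreover ∫|uₙ|^{q} → 0 and that F satisfies F(s) ≤ C_ε|s|^{q} + (η+ε)|s|^{2*} and H(s) := f(s)s − 2F(s) ≤ (2* − 2)F(s) pointwise. If P(uₙ) = Aₙ − (N/2)∫H(uₙ) = 0 for all n, then lim inf Aₙ ≥ (2*(η+ε))^{(2−N)/2} S^{N/2}. -/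
open Real Set Filter MeasureTheory

theorem stmt12 (N : ℕ) (hN : 3 ≤ N) (q η ε S : ℝ)
    (hq : q ∈ Ioo (2 : ℝ) ((2 * N : ℝ) / (N - 2 : ℝ)))
    (hη : 0 < η) (hε : 0 < ε) (hS : 0 < S)
    (f F H : ℝ → ℝ) (hH : ∀ s : ℝ, H s = f s * s - 2 * F s)
    (Cε : ℝ) (hCε : 0 < Cε)
    (hFgrowth : ∀ s : ℝ, F s ≤ Cε * |s| ^ q + (η + ε) * |s| ^ ((2 * N : ℝ) / (N - 2 : ℝ)))
    (hHF : ∀ s : ℝ, H s ≤ ((2 * N : ℝ) / (N - 2 : ℝ) - 2) * F s)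
    (u : ℕ → EuclideanSpace ℝ (Fin N) → ℝ) (hu1 : ∀ n, Differentiable ℝ (u n))
    (A : ℕ → ℝ)
    (hA : ∀ n, A n = ∫ x, ‖fderiv ℝ (u n) x‖ ^ 2 ∂(volume : Measure (EuclideanSpace ℝ (Fin N))))
    (Mc : ℝ) (hmassbdd : ∀ n,
      (∫ x, (u n x) ^ 2 ∂(volume : Measure (EuclideanSpace ℝ (Fin N)))) ≤ Mc)
    (MA : ℝ) (hAbdd : ∀ n, A n ≤ MA) (a : ℝ) (ha : 0 < a) (hAlb : ∀ n, a ≤ A n)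
    (hqint : ∀ n, Integrable (fun x => |u n x| ^ q)
      (volume : Measure (EuclideanSpace ℝ (Fin N))))
    (hcritint : ∀ n, Integrable (fun x => |u n x| ^ ((2 * N : ℝ) / (N - 2 : ℝ)))
      (volume : Measure (EuclideanSpace ℝ (Fin N))))
    (hHint : ∀ n, Integrable (fun x => H (u n x))
      (volume : Measure (EuclideanSpace ℝ (Fin N))))
    (hFint : ∀ n, Integrable (fun x => F (u n x))
      (volume : Measure (EuclideanSpace ℝ (Fin N))))
    (hqvanish : Tendsto (fun n =>
      ∫ x, |u n x| ^ q ∂(volume : Measure (EuclideanSpace ℝ (Fin N)))) atTop (nhds 0))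
    (hSob : ∀ n, S * (∫ x, |u n x| ^ ((2 * N : ℝ) / (N - 2 : ℝ))
        ∂(volume : Measure (EuclideanSpace ℝ (Fin N)))) ^ ((N - 2 : ℝ) / N) ≤ A n)
    (hP : ∀ n, A n - ((N : ℝ) / 2) *
      (∫ x, H (u n x) ∂(volume : Measure (EuclideanSpace ℝ (Fin N)))) = 0) :
    ((2 * N : ℝ) / (N - 2 : ℝ) * (η + ε)) ^ ((2 - N : ℝ) / 2) * S ^ ((N : ℝ) / 2) ≤
      Filter.atTop.liminf A := by
  have hN3 : (3:ℝ) ≤ (N:ℝ) := by exact_mod_cast hN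
  have hN2 : (0:ℝ) < (N:ℝ) - 2 := by linarith
  have hN0 : (0:ℝ) < (N:ℝ) := by linarith
  set p : ℝ := (2 * N : ℝ) / ((N:ℝ) - 2) with hpdef
  have hp2 : (2:ℝ) < p := lt_trans hq.1 hq.2
  have hp0 : (0:ℝ) < p := by linarith
  set r : ℝ := (N:ℝ) / ((N:ℝ) - 2) with hrdef
  have hr1 : (1:ℝ) < r := by rw [hrdef, lt_div_iff₀ hN2]; linarith
  have hr0 : (0:ℝ) < r := by linarith
  set e : ℝ := p * (η + ε) with hedef
  have he0 : (0:ℝ) < e := mul_pos hp0 (by linarith)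
  set K : ℝ := e ^ ((2 - N : ℝ) / 2) * S ^ ((N : ℝ) / 2) with hKdef
  -- key algebraic identity
  have hKr : e * K ^ (r - 1) = S ^ r := by
    have h1 : K ^ (r-1) = (e ^ ((2-(N:ℝ))/2))^(r-1) * (S ^ ((N:ℝ)/2))^(r-1) := by
      rw [hKdef, Real.mul_rpow (Real.rpow_nonneg he0.le _) (Real.rpow_nonneg hS.le _)]
    rw [h1, ← Real.rpow_mul he0.le, ← Real.rpow_mul hS.le]
    rw [show (2-(N:ℝ))/2 * (r-1) = -1 by rw [hrdef]; field_simp; ring]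
    rw [show (N:ℝ)/2 * (r-1) = r by rw [hrdef]; field_simp; ring]
    rw [Real.rpow_neg_one]
    field_simp
  -- notation for the integrals
  set Q : ℕ → ℝ := fun n => ∫ x, |u n x| ^ q ∂(volume : Measure (EuclideanSpace ℝ (Fin N))) with hQdef
  set I : ℕ → ℝ := fun n => ∫ x, |u n x| ^ p ∂(volume : Measure (EuclideanSpace ℝ (Fin N))) with hIdef
  have hqv : Tendsto Q atTop (nhds 0) := hqvanish
  have hI0 : ∀ n, 0 ≤ I n := fun n => integral_nonneg fun x => Real.rpow_nonneg (abs_nonneg _) _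
  have hQ0 : ∀ n, 0 ≤ Q n := fun n => integral_nonneg fun x => Real.rpow_nonneg (abs_nonneg _) _
  have hIA : ∀ n, I n ≤ (A n / S) ^ r := by
    intro n
    have h1 : S * (I n) ^ (((N:ℝ)-2)/(N:ℝ)) ≤ A n := hSob n
    have h2 : (I n) ^ (((N:ℝ)-2)/(N:ℝ)) ≤ A n / S := (le_div_iff₀' hS).mpr h1
    have h3 : ((I n) ^ (((N:ℝ)-2)/(N:ℝ))) ^ r = I n := by
      rw [← Real.rpow_mul (hI0 n),
        show (((N:ℝ)-2)/(N:ℝ)) * r = 1 by rw [hrdef]; field_simp, Real.rpow_one]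
    calc I n = ((I n) ^ (((N:ℝ)-2)/(N:ℝ))) ^ r := h3.symm
    _ ≤ (A n / S) ^ r := Real.rpow_le_rpow (Real.rpow_nonneg (hI0 n) _) h2 hr0.le
  have hmain : ∀ n, A n ≤ p * Cε * Q n + e * (A n / S) ^ r := by
    intro n
    have hP' : A n = (N:ℝ)/2 * ∫ x, H (u n x) := by have := hP n; linarith
    have h2 : (∫ x, H (u n x)) ≤ (p - 2) * ∫ x, F (u n x) := by
      have hle : (∫ x, H (u n x)) ≤ ∫ x, (p-2) * F (u n x) :=
        integral_mono (hHint n) ((hFint n).const_mul (p-2)) (fun x => hHF (u n x))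
      rwa [integral_const_mul] at hle
    have h3 : (∫ x, F (u n x)) ≤ Cε * Q n + (η+ε) * I n := by
      have hle : (∫ x, F (u n x)) ≤ ∫ x, (Cε * |u n x| ^ q + (η+ε) * |u n x| ^ p) :=
        integral_mono (hFint n) (((hqint n).const_mul Cε).add ((hcritint n).const_mul (η+ε))) (fun x => hFgrowth (u n x))
      rwa [integral_add ((hqint n).const_mul Cε) ((hcritint n).const_mul (η+ε)), integral_const_mul, integral_const_mul] at hle
    have hNp : (N:ℝ)/2 * (p-2) = p := by rw [hpdef]; field_simp; ring
    have h4 : A n ≤ p * (Cε * Q n + (η+ε) * I n) := by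
      calc A n = (N:ℝ)/2 * ∫ x, H (u n x) := hP'
      _ ≤ (N:ℝ)/2 * ((p-2) * ∫ x, F (u n x)) := mul_le_mul_of_nonneg_left h2 (by linarith)
      _ = p * ∫ x, F (u n x) := by rw [← mul_assoc, hNp]
      _ ≤ p * (Cε * Q n + (η+ε) * I n) := mul_le_mul_of_nonneg_left h3 hp0.le
    have h5 : (η+ε) * I n ≤ (η+ε) * (A n / S)^r :=
      mul_le_mul_of_nonneg_left (hIA n) (by linarith)
    calc A n ≤ p * (Cε * Q n + (η+ε) * I n) := h4
    _ ≤ p * (Cε * Q n + (η+ε) * (A n/S)^r) := mul_le_mul_of_nonneg_left (by linarith) hp0.le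
    _ = p * Cε * Q n + e * (A n/S)^r := by rw [hedef]; ring
  clear_value p r e K Q I
  have hgpos : ∀ x : ℝ, 0 < x → x < K → 0 < x - e * (x / S) ^ r := by
    intro x hx hxK
    have h1 : x ^ (r-1) < K ^ (r-1) := Real.rpow_lt_rpow hx.le hxK (by linarith)
    have h2 : e * x^(r-1) < S ^ r := by
      calc e * x^(r-1) < e * K^(r-1) := mul_lt_mul_of_pos_left h1 he0
      _ = S ^ r := hKr
    have hdiv : (x / S)^r = x^r / S^r := Real.div_rpow hx.le hS.le r
    have hxr : x ^ r = x ^ (r-1) * x := by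
      rw [← Real.rpow_add_one hx.ne' (r-1)]; norm_num
    have hSr : (0:ℝ) < S ^ r := Real.rpow_pos_of_pos hS r
    have hlt : e * (x/S)^r < x := by
      rw [hdiv, hxr]
      have hmm : e * x^(r-1) * x < S^r * x := mul_lt_mul_of_pos_right h2 hx
      calc e * (x^(r-1)*x/S^r) = (e*x^(r-1)*x)/S^r := by ring
      _ < (S^r * x)/S^r := by apply div_lt_div_of_pos_right hmm hSr
      _ = x := by field_simp
    linarith
  have key : ∀ b' : ℝ, b' < K → ∀ᶠ n in atTop, b' ≤ A n := by
    intro b' hb'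
    rcases lt_or_ge b' a with hba | hba
    · exact Eventually.of_forall fun n => hba.le.trans (hAlb n)
    · set g : ℝ → ℝ := fun x => x - e * (x / S) ^ r with hgdef
      have hcont : ContinuousOn g (Icc a b') :=
        (continuous_id.sub (continuous_const.mul ((continuous_id.div_const S).rpow_const
          fun x => Or.inr hr0.le))).continuousOn
      obtain ⟨x₀, hx₀mem, hx₀min⟩ := isCompact_Icc.exists_isMinOn (nonempty_Icc.mpr hba) hcont
      have hδ : 0 < g x₀ := hgpos x₀ (lt_of_lt_of_le ha hx₀mem.1) (lt_of_le_of_lt hx₀mem.2 hb')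
      have hpc : (0:ℝ) < p * Cε := mul_pos hp0 hCε
      have hev : ∀ᶠ n in atTop, Q n < g x₀ / (p * Cε) :=
        hqv.eventually_lt_const (by positivity)
      filter_upwards [hev] with n hn
      by_contra hcon
      push_neg at hcon
      have hmem : A n ∈ Icc a b' := ⟨hAlb n, hcon.le⟩
      have h6 : g x₀ ≤ g (A n) := hx₀min hmem
      have h7 : p * Cε * Q n < g x₀ := by
        have := (lt_div_iff₀ hpc).mp hn
        linarith
      have h8 := hmain n
      have h9 : g (A n) = A n - e * (A n / S) ^ r := rfl
      rw [h9] at h6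
      have h10 : p * Cε * Q n < A n - e * (A n / S) ^ r := h7.trans_le h6
      linarith [h10, h8]
  have hbdd : IsBoundedUnder (· ≤ ·) atTop A :=
    ⟨MA, eventually_map.mpr (Eventually.of_forall hAbdd)⟩
  have hcob : IsCoboundedUnder (· ≥ ·) atTop A := hbdd.isCoboundedUnder_ge
  refine le_of_forall_lt fun c hc => ?_
  have h1 : ∀ᶠ n in atTop, (c + K)/2 ≤ A n := key _ (by linarith)
  have h2 : (c + K)/2 ≤ Filter.atTop.liminf A := le_liminf_of_le hcob h1
  linarith
end
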